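/- Let T be a marked tree. The components of T (L-components and 5-components) are pairwise vertex-disjoint; every L-component contains exactly two marked leaves, and every 5-component contains exactly five marked leaves. -/

import Mathlib

open SimpleGraph

/-- A set of indices of `Fin n` is *cyclically consecutive* (a cyclic interval). -/
def IsCyclicInterval {n : ℕ} (A : Set (Fin n)) : Prop :=
  ∃ a len : ℕ, A = {i : Fin n | ∃ j : ℕ, j < len ∧ (i : ℕ) = (a + j) % n}

/-- `j` is the cyclically next element of `M` after `i` (i.e. `i` and `j` are consecutive
elements of `M` in the cyclic order of `Fin n`). -/
def CyclicNextIn {n : ℕ} (M : Finset (Fin n)) (i j : Fin n) : Prop :=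
  i ∈ M ∧ j ∈ M ∧ ∃ d : ℕ, 0 < d ∧ (j : ℕ) = ((i : ℕ) + d) % n ∧
    ∀ t : ℕ, 0 < t → t < d → ∀ k : Fin n, (k : ℕ) = ((i : ℕ) + t) % n → k ∉ M

/-- A *marked tree*: a proper binary tree `T` (a finite tree with all degrees 1 or 3) together
with a planar cyclic ordering `ord` of its `n` leaves (planar: for every edge, the leaves in
each of the two components of `T` minus that edge are cyclically consecutive), a set `marked`
of marked leaves (given by their indices in the cyclic order), and for each marked leaf a
*neighborhood*: a subtree of `T` (a connected subgraph, identified with its vertex set)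
containing that leaf, such that any two marked leaves consecutive in the cyclic ordering
restricted to the marked leaves have vertex-disjoint neighborhoods. -/
structure MarkedTree (V : Type*) [Fintype V] where
  /-- the underlying graph -/
  T : SimpleGraph V
  /-- `T` is a tree -/
  isTree : T.IsTree
  /-- `T` is a proper binary tree: every vertex has degree 1 (a leaf) or degree 3 -/
  proper : ∀ v : V, Nat.card (T.neighborSet v) = 1 ∨ Nat.card (T.neighborSet v) = 3
  /-- the number of leaves -/
  n : ℕ
  /-- the cyclic ordering of the leaves -/
  ord : Fin n ≃ {v : V // Nat.card (T.neighborSet v) = 1}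
  /-- planarity of the cyclic ordering: for each edge `{u, w}`, the set of (indices of) leaves
  lying in the component of `u` in `T` minus the edge `{u, w}` is cyclically consecutive -/
  planar : ∀ u w : V, T.Adj u w →
    IsCyclicInterval {i : Fin n | (T.deleteEdges {s(u, w)}).Reachable u (ord i).1}
  /-- the indices of the marked leaves -/
  marked : Finset (Fin n)
  /-- the neighborhood of each (marked) leaf, as a set of vertices -/
  nh : Fin n → Set V
  /-- the neighborhood of a marked leaf contains that leaf -/
  nh_mem : ∀ i ∈ marked, (ord i).1 ∈ nh i
  /-- the neighborhood of a marked leaf is a subtree: it induces a connected subgraph -/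
  nh_conn : ∀ i ∈ marked, (T.induce (nh i)).Connected
  /-- consecutive marked leaves have vertex-disjoint neighborhoods -/
  consec_disjoint : ∀ i j : Fin n, i ≠ j → CyclicNextIn marked i j →
    Disjoint (nh i) (nh j)

namespace MarkedTree

variable {V : Type*} [Fintype V] (MT : MarkedTree V)

/-- `v` is a marked leaf (as a vertex of `T`). -/
def IsMarkedLeaf (v : V) : Prop :=
  ∃ i ∈ MT.marked, (MT.ord i).1 = v

/-- The neighbors `w` of `v` such that the connected component of `T − v` containing `w`
contains a marked leaf.  Their number is the degree of `v` in the minimal subtree `T_u`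
of `T` spanning the marked leaves (with degree-2 vertices suppressed), when `v` belongs
to that subtree. -/
def branchDirs (v : V) : Set V :=
  {w | MT.T.Adj v w ∧ ∃ ℓ, MT.IsMarkedLeaf ℓ ∧ ∃ p : MT.T.Walk w ℓ, v ∉ p.support}

/-- `v` is a *branch node*: an (internal) vertex of the tree `T_u` obtained from `T` by
deleting all unmarked leaves and suppressing degree-2 vertices, i.e. a vertex such that at
least 3 components of `T − v` contain marked leaves.  These are exactly the vertices of the
tree `T_u*` obtained from `T_u` by deleting its leaves (which are the marked leaves). -/
def IsBranchNode (v : V) : Prop :=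
  3 ≤ Nat.card (MT.branchDirs v)

/-- The marked leaves *attached* to `v`, i.e. the marked leaves that are neighbors of `v`
in the suppressed tree `T_u`: the path in `T` from `v` to such a leaf passes through no
other branch node. -/
def attached (v : V) : Set V :=
  {ℓ | MT.IsMarkedLeaf ℓ ∧ ∃ p : MT.T.Walk v ℓ, p.IsPath ∧
    ∀ w ∈ p.support, w ≠ v → w ≠ ℓ → ¬ MT.IsBranchNode w}

/-- `v` is an *L-node*: it has degree 1 in `T_u*`, i.e. it neighbors two (marked) leaves
in `T_u`. -/
def IsLNode (v : V) : Prop :=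
  MT.IsBranchNode v ∧ Nat.card (MT.attached v) = 2

/-- `v` is a *C-node*: it has degree 2 in `T_u*`, i.e. it neighbors one (marked) leaf
in `T_u`. -/
def IsCNode (v : V) : Prop :=
  MT.IsBranchNode v ∧ Nat.card (MT.attached v) = 1

/-- `v` is a *J-node*: it has degree 3 in `T_u*`, i.e. it neighbors no (marked) leaf
in `T_u`. -/
def IsJNode (v : V) : Prop :=
  MT.IsBranchNode v ∧ MT.attached v = ∅

/-- `v` is a *labeled* node of `T`. -/
def IsLabeled (v : V) : Prop :=
  MT.IsLNode v ∨ MT.IsCNode v ∨ MT.IsJNode v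

/-- Two C-nodes are *consecutive on a spine* if the path between them in `T` passes through
no other branch node (i.e. they are adjacent in `T_u*`). -/
def SpineAdj (u v : V) : Prop :=
  u ≠ v ∧ MT.IsCNode u ∧ MT.IsCNode v ∧ ∃ p : MT.T.Walk u v, p.IsPath ∧
    ∀ w ∈ p.support, w ≠ u → w ≠ v → ¬ MT.IsBranchNode w

/-- The union of the subtrees of `T` incident to `v` (connected components of `T − v`)
that contain no labeled node. -/
def hangSet (v : V) : Set V :=
  ⋃ w ∈ {w | MT.T.Adj v w ∧ ∀ u, (∃ p : MT.T.Walk w u, v ∉ p.support) → ¬ MT.IsLabeled u},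
    {u | ∃ p : MT.T.Walk w u, v ∉ p.support}

/-- The *L-component* defined by an L-node `lam`: `lam` together with the subtrees of `T`
incident to `lam` that contain no labeled node. -/
def LComponent (lam : V) : Set V :=
  insert lam (MT.hangSet lam)

/-- `K` is an L-component of `T`. -/
def IsLComponent (K : Set V) : Prop :=
  ∃ lam, MT.IsLNode lam ∧ K = MT.LComponent lam

/-- `K` is the *5-component* of `T` defined by the five successive C-nodes `c 0, …, c 4` on a
spine: the path in `T` from `c 0` to `c 4` together with the subtrees of `T` incident to the
vertices of this path that contain no labeled node.  `c 0` and `c 4` are its *extreme nodes*. -/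
def IsFiveComponentOn (c : Fin 5 → V) (K : Set V) : Prop :=
  Function.Injective c ∧
  (∀ i : Fin 4, MT.SpineAdj (c i.castSucc) (c i.succ)) ∧
  ∃ p : MT.T.Walk (c 0) (c 4), p.IsPath ∧
    K = {u | u ∈ p.support} ∪ ⋃ v ∈ {u | u ∈ p.support}, MT.hangSet v

/-- `K` is a 5-component of `T`. -/
def IsFiveComponent (K : Set V) : Prop :=
  ∃ c : Fin 5 → V, MT.IsFiveComponentOn c K


/-! ### Auxiliary infrastructure -/

open SimpleGraph.Walk in
/-- `b` is reachable from `a` by a walk avoiding `m`. -/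
def Away (m a b : V) : Prop := ∃ p : MT.T.Walk a b, m ∉ p.support

variable {MT}

lemma Away.symm {m a b : V} (h : MT.Away m a b) : MT.Away m b a := by
  obtain ⟨p, hp⟩ := h
  exact ⟨p.reverse, by simpa [SimpleGraph.Walk.support_reverse] using hp⟩

lemma Away.trans {m a b c : V} (h : MT.Away m a b) (h' : MT.Away m b c) :
    MT.Away m a c := by
  obtain ⟨p, hp⟩ := h
  obtain ⟨q, hq⟩ := h'
  refine ⟨p.append q, ?_⟩
  rw [SimpleGraph.Walk.mem_support_append_iff]
  tauto

lemma away_refl {m a : V} (h : a ≠ m) : MT.Away m a a :=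
  ⟨SimpleGraph.Walk.nil, by simpa using h.symm⟩

lemma Away.ne_left {m a b : V} (h : MT.Away m a b) : a ≠ m := by
  obtain ⟨p, hp⟩ := h
  exact fun hh => hp (hh ▸ p.start_mem_support)

lemma Away.ne_right {m a b : V} (h : MT.Away m a b) : b ≠ m :=
  h.symm.ne_left

lemma exists_dir {m a : V} (h : a ≠ m) :
    ∃ w, MT.T.Adj m w ∧ MT.Away m w a := by
  classical
  obtain ⟨p0⟩ : MT.T.Reachable m a := MT.isTree.isConnected.preconnected m a
  have hp : p0.toPath.1.IsPath := p0.toPath.2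
  rcases hw : p0.toPath.1 with _ | ⟨hadj, q⟩
  · exact absurd rfl h.symm
  · rw [hw] at hp
    rw [SimpleGraph.Walk.cons_isPath_iff] at hp
    exact ⟨_, hadj, q, hp.2⟩

lemma dir_unique {m w w' a : V} (h1 : MT.T.Adj m w) (h2 : MT.T.Adj m w')
    (ha : MT.Away m w a) (hb : MT.Away m w' a) : w = w' := by
  classical
  by_contra hne
  obtain ⟨W, hW⟩ := ha.trans hb.symm
  have hWp : W.toPath.1.IsPath := W.toPath.2
  have hWm : m ∉ W.toPath.1.support := fun hm =>
    hW (SimpleGraph.Walk.support_toPath_subset W hm)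
  have hA : (SimpleGraph.Walk.cons h2 SimpleGraph.Walk.nil).IsPath := by
    rw [SimpleGraph.Walk.cons_isPath_iff]
    simpa using h2.ne
  have hB : (SimpleGraph.Walk.cons h1 W.toPath.1).IsPath := by
    rw [SimpleGraph.Walk.cons_isPath_iff]
    exact ⟨hWp, hWm⟩
  obtain ⟨P, -, hP⟩ := MT.isTree.existsUnique_path m w'
  have hAB : (SimpleGraph.Walk.cons h2 SimpleGraph.Walk.nil : MT.T.Walk m w')
      = SimpleGraph.Walk.cons h1 W.toPath.1 := by
    rw [hP _ hA, hP _ hB]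
  have hmem : w ∈ (SimpleGraph.Walk.cons h2 (SimpleGraph.Walk.nil : MT.T.Walk w' w')).support := by
    rw [hAB]
    simp only [SimpleGraph.Walk.support_cons, List.mem_cons]
    exact Or.inr (SimpleGraph.Walk.start_mem_support _)
  simp only [SimpleGraph.Walk.support_cons, SimpleGraph.Walk.support_nil, List.mem_cons,
    List.mem_singleton, List.not_mem_nil, or_false] at hmem
  rcases hmem with h | h
  · exact h1.ne' h
  · exact hne h

/-- If `m` is a vertex of a path from `u` to `v` other than `u`, then `v` is
reachable from `m` avoiding `u`. -/
lemma away_of_mem_support {u v m : V} {p : MT.T.Walk u v} (hp : p.IsPath)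
    (hm : m ∈ p.support) (hne : m ≠ u) : MT.Away u m v := by
  classical
  refine ⟨p.dropUntil m hm, fun hu => ?_⟩
  have hspec := SimpleGraph.Walk.take_spec p hm
  have hnodup : p.support.Nodup := hp.support_nodup
  rw [← hspec, SimpleGraph.Walk.support_append] at hnodup
  have hdisj := (List.nodup_append.mp hnodup).2.2
  have hu' : u ∈ (p.dropUntil m hm).support.tail := by
    have hc := SimpleGraph.Walk.support_eq_cons (p.dropUntil m hm)
    rw [hc] at hu
    rcases List.mem_cons.mp hu with hu | hu
    · exact absurd hu.symm hne
    · exact hu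
  exact hdisj _ (SimpleGraph.Walk.start_mem_support _) _ hu' rfl

/-- An internal vertex of a path from `u` to `v` separates `u` from `v`. -/
lemma not_away_of_interior {u v m : V} {p : MT.T.Walk u v} (hp : p.IsPath)
    (hm : m ∈ p.support) (hu : m ≠ u) (hv : m ≠ v) : ¬ MT.Away m u v := by
  classical
  rintro ⟨W, hW⟩
  have hWm : m ∉ W.toPath.1.support := fun hmm =>
    hW (SimpleGraph.Walk.support_toPath_subset W hmm)
  obtain ⟨P, -, hP⟩ := MT.isTree.existsUnique_path u v
  have hpW : p = W.toPath.1 := by rw [hP _ hp, hP _ W.toPath.2]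
  rw [hpW] at hm
  exact hWm hm

lemma mem_branchDirs_iff {v w : V} :
    w ∈ MT.branchDirs v ↔ MT.T.Adj v w ∧ ∃ ℓ, MT.IsMarkedLeaf ℓ ∧ MT.Away v w ℓ :=
  Iff.rfl

lemma branchDirs_subset_neighborSet (v : V) : MT.branchDirs v ⊆ MT.T.neighborSet v :=
  fun _ hw => hw.1

lemma ncard_neighborSet_le (v : V) : (MT.T.neighborSet v).ncard ≤ 3 := by
  rcases MT.proper v with h | h <;>
    rw [← Nat.card_coe_set_eq] <;> omega

lemma isBranchNode_of_three_dirs {v w1 w2 w3 : V} (h1 : w1 ∈ MT.branchDirs v)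
    (h2 : w2 ∈ MT.branchDirs v) (h3 : w3 ∈ MT.branchDirs v)
    (h12 : w1 ≠ w2) (h13 : w1 ≠ w3) (h23 : w2 ≠ w3) : MT.IsBranchNode v := by
  unfold IsBranchNode
  rw [Nat.card_coe_set_eq]
  have hsub : ({w1, w2, w3} : Set V) ⊆ MT.branchDirs v := by
    intro x hx
    rcases hx with rfl | rfl | rfl <;> assumption
  have hcard : ({w1, w2, w3} : Set V).ncard = 3 := by
    rw [Set.ncard_insert_of_notMem (by simp [h12, h13]) (Set.toFinite _),
      Set.ncard_pair h23]
  rw [← hcard]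
  exact Set.ncard_le_ncard hsub (Set.toFinite _)

lemma IsBranchNode.ncard_branchDirs {v : V} (h : MT.IsBranchNode v) :
    (MT.branchDirs v).ncard = 3 := by
  have h1 : (MT.branchDirs v).ncard ≤ 3 :=
    le_trans (Set.ncard_le_ncard (MT.branchDirs_subset_neighborSet v) (Set.toFinite _))
      (MT.ncard_neighborSet_le v)
  have h2 : 3 ≤ (MT.branchDirs v).ncard := by
    have := h; unfold IsBranchNode at this; rwa [Nat.card_coe_set_eq] at this
  omega

lemma IsBranchNode.three_dirs {v : V} (h : MT.IsBranchNode v) :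
    ∃ w1 w2 w3, w1 ≠ w2 ∧ w1 ≠ w3 ∧ w2 ≠ w3 ∧ MT.branchDirs v = {w1, w2, w3} := by
  obtain ⟨x, y, z, hxy, hxz, hyz, hs⟩ := Set.ncard_eq_three.mp h.ncard_branchDirs
  exact ⟨x, y, z, hxy, hxz, hyz, hs⟩

lemma not_branch_dirs {v w1 w2 w3 : V} (h : ¬ MT.IsBranchNode v)
    (h1 : w1 ∈ MT.branchDirs v) (h2 : w2 ∈ MT.branchDirs v) (h3 : w3 ∈ MT.branchDirs v)
    (h12 : w1 ≠ w2) : w3 = w1 ∨ w3 = w2 := by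
  by_contra hc
  push_neg at hc
  exact h (MT.isBranchNode_of_three_dirs h1 h2 h3 h12 (Ne.symm hc.1) (Ne.symm hc.2))

/-- Beyond a branch node `v`, away from `x`, there is a marked leaf. -/
lemma IsBranchNode.marked_beyond {v x : V} (hv : MT.IsBranchNode v) (hx : x ≠ v) :
    ∃ ℓ, MT.IsMarkedLeaf ℓ ∧ ¬ MT.Away v ℓ x := by
  obtain ⟨w0, hw0, hw0x⟩ := exists_dir hx
  obtain ⟨w1, w2, w3, h12, h13, h23, hs⟩ := hv.three_dirs
  have : ∃ w, w ∈ MT.branchDirs v ∧ w ≠ w0 := by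
    rcases eq_or_ne w1 w0 with rfl | h1
    · exact ⟨w2, by rw [hs]; simp, Ne.symm h12⟩
    · exact ⟨w1, by rw [hs]; simp, h1⟩
  obtain ⟨w, hw, hww0⟩ := this
  obtain ⟨hadj, ℓ, hℓ, hℓw⟩ := hw
  refine ⟨ℓ, hℓ, fun hc => ?_⟩
  exact hww0 (dir_unique hadj hw0 (Away.trans hℓw hc) hw0x)

lemma IsMarkedLeaf.card_one {ℓ : V} (h : MT.IsMarkedLeaf ℓ) :
    Nat.card (MT.T.neighborSet ℓ) = 1 := by
  obtain ⟨i, hi, rfl⟩ := h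
  exact (MT.ord i).2

lemma IsMarkedLeaf.not_branch {ℓ : V} (h : MT.IsMarkedLeaf ℓ) : ¬ MT.IsBranchNode ℓ := by
  intro hb
  have h3 := hb.ncard_branchDirs
  have hle : (MT.branchDirs ℓ).ncard ≤ (MT.T.neighborSet ℓ).ncard :=
    Set.ncard_le_ncard (MT.branchDirs_subset_neighborSet ℓ) (Set.toFinite _)
  have h1 : (MT.T.neighborSet ℓ).ncard = 1 := by
    rw [← Nat.card_coe_set_eq]; exact h.card_one
  omega

/-- A (marked) leaf cannot be an internal vertex of a path. -/
lemma IsMarkedLeaf.not_interior {ℓ u v : V} (h : MT.IsMarkedLeaf ℓ) {p : MT.T.Walk u v}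
    (hp : p.IsPath) (hm : ℓ ∈ p.support) (hu : ℓ ≠ u) (hv : ℓ ≠ v) : False := by
  classical
  set tk := p.takeUntil ℓ hm with htk
  set dr := p.dropUntil ℓ hm with hdr
  have hspec := SimpleGraph.Walk.take_spec p hm
  have hnodup : p.support.Nodup := hp.support_nodup
  rw [← hspec, SimpleGraph.Walk.support_append] at hnodup
  have hdisj := (List.nodup_append.mp hnodup).2.2
  -- second vertex of `dr`
  have hdrnil : ¬ dr.Nil := SimpleGraph.Walk.not_nil_of_ne hv
  obtain ⟨n2, hadj2, q2, hq2⟩ := SimpleGraph.Walk.not_nil_iff.mp hdrnil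
  -- last-but-one vertex of `tk`, via its reverse
  have htknil : ¬ tk.reverse.Nil := SimpleGraph.Walk.not_nil_of_ne hu
  obtain ⟨n1, hadj1, q1, hq1⟩ := SimpleGraph.Walk.not_nil_iff.mp htknil
  have hn1 : n1 ∈ tk.support := by
    have : n1 ∈ tk.reverse.support := by
      rw [hq1]
      simp only [SimpleGraph.Walk.support_cons, List.mem_cons]
      exact Or.inr (SimpleGraph.Walk.start_mem_support _)
    rwa [SimpleGraph.Walk.support_reverse, List.mem_reverse] at this
  have hn2 : n2 ∈ dr.support.tail := by
    have : dr.support = ℓ :: q2.support := by rw [hq2]; simp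
    rw [this]
    exact SimpleGraph.Walk.start_mem_support _
  have hne12 : n1 ≠ n2 := fun hh => hdisj _ hn1 _ hn2 hh
  -- two distinct neighbors of ℓ
  have hcard : ({n1, n2} : Set V).ncard = 2 := Set.ncard_pair hne12
  have hsub : ({n1, n2} : Set V) ⊆ MT.T.neighborSet ℓ := by
    intro x hx
    rcases hx with rfl | rfl
    · exact hadj1
    · exact hadj2
  have h1 : (MT.T.neighborSet ℓ).ncard = 1 := by
    rw [← Nat.card_coe_set_eq]; exact h.card_one
  have := Set.ncard_le_ncard hsub (Set.toFinite _)
  omega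

lemma diverge_aux : ∀ (n : ℕ) {x a a' : V} (Q : MT.T.Walk x a) (Q' : MT.T.Walk x a'),
    Q.length ≤ n → Q.IsPath → Q'.IsPath →
    ∃ (m : V) (r : MT.T.Walk x m) (s : MT.T.Walk m a) (t : MT.T.Walk m a'),
      Q = r.append s ∧ Q' = r.append t ∧ (s.Nil ∨ t.Nil ∨ ¬ MT.Away m a a') := by
  intro n
  induction n with
  | zero =>
    intro x a a' Q Q' hlen hQ hQ'
    cases Q with
    | nil => exact ⟨x, SimpleGraph.Walk.nil, SimpleGraph.Walk.nil, Q', by simp, by simp,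
        Or.inl (by simp)⟩
    | cons h p => simp [SimpleGraph.Walk.length_cons] at hlen
  | succ n ih =>
    intro x a a' Q Q' hlen hQ hQ'
    cases Q with
    | nil => exact ⟨x, SimpleGraph.Walk.nil, SimpleGraph.Walk.nil, Q', by simp, by simp,
        Or.inl (by simp)⟩
    | @cons _ w _ h p =>
      cases Q' with
      | nil => exact ⟨x, SimpleGraph.Walk.nil, SimpleGraph.Walk.cons h p,
          SimpleGraph.Walk.nil, by simp, by simp, Or.inr (Or.inl (by simp))⟩
      | @cons _ w' _ h' p' =>
        have hp : p.IsPath ∧ x ∉ p.support := (SimpleGraph.Walk.cons_isPath_iff h p).mp hQ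
        have hp' : p'.IsPath ∧ x ∉ p'.support := (SimpleGraph.Walk.cons_isPath_iff h' p').mp hQ'
        by_cases hww : w = w'
        · subst hww
          have hlen' : p.length ≤ n := by
            simp only [SimpleGraph.Walk.length_cons] at hlen; omega
          obtain ⟨m, r, s, t, he1, he2, hd⟩ := ih p p' hlen' hp.1 hp'.1
          have hh : h' = h := rfl
          refine ⟨m, SimpleGraph.Walk.cons h r, s, t, ?_, ?_, hd⟩
          · rw [SimpleGraph.Walk.cons_append, ← he1]
          · rw [SimpleGraph.Walk.cons_append, ← he2, hh]
        · refine ⟨x, SimpleGraph.Walk.nil, SimpleGraph.Walk.cons h p,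
            SimpleGraph.Walk.cons h' p', by simp, by simp, Or.inr (Or.inr ?_)⟩
          intro haa
          have hwa : MT.Away x w a := ⟨p, hp.2⟩
          have hwa' : MT.Away x w' a' := ⟨p', hp'.2⟩
          exact hww (dir_unique h h' hwa (Away.trans hwa' haa.symm))

lemma diverge {x a a' : V} (Q : MT.T.Walk x a) (Q' : MT.T.Walk x a')
    (hQ : Q.IsPath) (hQ' : Q'.IsPath) :
    ∃ (m : V) (r : MT.T.Walk x m) (s : MT.T.Walk m a) (t : MT.T.Walk m a'),
      Q = r.append s ∧ Q' = r.append t ∧ (s.Nil ∨ t.Nil ∨ ¬ MT.Away m a a') :=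
  diverge_aux Q.length Q Q' le_rfl hQ hQ'

lemma exists_isPath (u v : V) : ∃ p : MT.T.Walk u v, p.IsPath := by
  classical
  obtain ⟨p0⟩ : MT.T.Reachable u v := MT.isTree.isConnected.preconnected u v
  exact ⟨p0.toPath.1, p0.toPath.2⟩

/-- The core divergence argument: two paths from `x`, starting in the same direction,
with the first having no branch node in its interior, leading to two distinct targets
with marked leaves "behind" them and a marked leaf "behind" `x`.  Then one of the
endpoints lies on the other path. -/
lemma core {x a a' : V} (Q : MT.T.Walk x a) (Q' : MT.T.Walk x a')
    (hQ : Q.IsPath) (hQ' : Q'.IsPath)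
    (hQint : ∀ z ∈ Q.support, z ≠ x → z ≠ a → ¬ MT.IsBranchNode z)
    (hxa : x ≠ a) (hxa' : x ≠ a') (haa' : a ≠ a')
    {w : V} (hw : MT.T.Adj x w) (hwa : MT.Away x w a) (hwa' : MT.Away x w a')
    {ℓ1 : V} (h1 : MT.IsMarkedLeaf ℓ1) (h1' : ¬ MT.Away a ℓ1 x)
    {ℓ2 : V} (h2 : MT.IsMarkedLeaf ℓ2) (h2' : ¬ MT.Away a' ℓ2 x)
    {ℓ3 : V} (h3 : MT.IsMarkedLeaf ℓ3) (h3' : ¬ MT.Away x ℓ3 a) :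
    a ∈ Q'.support ∨ a' ∈ Q.support := by
  obtain ⟨m, r, s, t, he1, he2, hd⟩ := MT.diverge Q Q' hQ hQ'
  have hmQ : m ∈ Q.support := he1 ▸ SimpleGraph.Walk.subset_support_append_left _ _
    (SimpleGraph.Walk.end_mem_support r)
  have hmQ' : m ∈ Q'.support := he2 ▸ SimpleGraph.Walk.subset_support_append_left _ _
    (SimpleGraph.Walk.end_mem_support r)
  rcases hd with hnil | hnil | hd
  · exact Or.inl (hnil.eq ▸ hmQ')
  · exact Or.inr (hnil.eq ▸ hmQ)
  rcases eq_or_ne m a with rfl | hma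
  · exact Or.inl hmQ'
  rcases eq_or_ne m a' with rfl | hma'
  · exact Or.inr hmQ
  exfalso
  have hmx : m ≠ x := by
    rintro rfl
    exact hd (Away.trans (Away.symm hwa) hwa')
  have haxm : MT.Away x m a := away_of_mem_support hQ hmQ hmx
  have haxm' : MT.Away x m a' := away_of_mem_support hQ' hmQ' hmx
  have hamx : MT.Away a m x := by
    refine away_of_mem_support hQ.reverse ?_ hma
    rw [SimpleGraph.Walk.support_reverse, List.mem_reverse]; exact hmQ
  have ham'x : MT.Away a' m x := by
    refine away_of_mem_support hQ'.reverse ?_ hma'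
    rw [SimpleGraph.Walk.support_reverse, List.mem_reverse]; exact hmQ'
  obtain ⟨A, hA_adj, hA⟩ := exists_dir (show a ≠ m from Ne.symm hma)
  obtain ⟨A', hA'_adj, hA'⟩ := exists_dir (show a' ≠ m from Ne.symm hma')
  obtain ⟨X, hX_adj, hX⟩ := exists_dir (show x ≠ m from Ne.symm hmx)
  have hsep1 : ¬ MT.Away m x a := not_away_of_interior hQ hmQ hmx hma
  have hsep2 : ¬ MT.Away m x a' := not_away_of_interior hQ' hmQ' hmx hma'
  have hXA : X ≠ A := fun hh => hsep1 (Away.trans (Away.symm hX) (hh ▸ hA))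
  have hXA' : X ≠ A' := fun hh => hsep2 (Away.trans (Away.symm hX) (hh ▸ hA'))
  have hAA' : A ≠ A' := fun hh => hd (Away.trans (Away.symm hA) (hh ▸ hA'))
  have hmaℓ1 : MT.Away m a ℓ1 := by
    rcases eq_or_ne ℓ1 a with rfl | hne
    · exact away_refl (Ne.symm hma)
    · obtain ⟨W, hW⟩ := MT.exists_isPath a ℓ1
      refine ⟨W, fun hmem => ?_⟩
      exact h1' (Away.trans (Away.symm (away_of_mem_support hW hmem hma)) hamx)
  have hmaℓ2 : MT.Away m a' ℓ2 := by
    rcases eq_or_ne ℓ2 a' with rfl | hne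
    · exact away_refl (Ne.symm hma')
    · obtain ⟨W, hW⟩ := MT.exists_isPath a' ℓ2
      refine ⟨W, fun hmem => ?_⟩
      exact h2' (Away.trans (Away.symm (away_of_mem_support hW hmem hma')) ham'x)
  have hmxℓ3 : MT.Away m x ℓ3 := by
    rcases eq_or_ne ℓ3 x with rfl | hne
    · exact away_refl (Ne.symm hmx)
    · obtain ⟨W, hW⟩ := MT.exists_isPath x ℓ3
      refine ⟨W, fun hmem => ?_⟩
      exact h3' (Away.trans (Away.symm (away_of_mem_support hW hmem hmx)) haxm)
  have hbranch : MT.IsBranchNode m :=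
    MT.isBranchNode_of_three_dirs ⟨hA_adj, ℓ1, h1, Away.trans hA hmaℓ1⟩
      ⟨hA'_adj, ℓ2, h2, Away.trans hA' hmaℓ2⟩ ⟨hX_adj, ℓ3, h3, Away.trans hX hmxℓ3⟩
      hAA' (Ne.symm hXA) (Ne.symm hXA')
  exact hQint m hmQ hmx hma hbranch

lemma not_away_start {m c : V} : ¬ MT.Away m m c :=
  fun ⟨p, hp⟩ => hp p.start_mem_support

lemma not_away_end {m c : V} : ¬ MT.Away m c m :=
  fun h => not_away_start (Away.symm h)

lemma away_take {m u z vv : V} {p : MT.T.Walk u z} (hm : m ∉ p.support)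
    (hv : vv ∈ p.support) : MT.Away m u vv := by
  classical
  exact ⟨p.takeUntil vv hv, fun hc => hm (SimpleGraph.Walk.support_takeUntil_subset _ _ hc)⟩

lemma away_cons {b wi z v : V} (hadj : MT.T.Adj b wi) (h : MT.Away b wi z)
    (hvb : v ≠ b) (hnv : ¬ MT.Away b wi v) : MT.Away v b z := by
  obtain ⟨p, hp⟩ := h
  refine ⟨SimpleGraph.Walk.cons hadj p, ?_⟩
  simp only [SimpleGraph.Walk.support_cons, List.mem_cons, not_or]
  exact ⟨hvb, fun hc => hnv (away_take hp hc)⟩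

lemma away_dir_distinct {b w1 w2 z z' : V} (hadj1 : MT.T.Adj b w1) (hadj2 : MT.T.Adj b w2)
    (h1 : MT.Away b w1 z) (h2 : MT.Away b w2 z') (hne : w1 ≠ w2) : ¬ MT.Away b z z' :=
  fun h => hne (dir_unique hadj1 hadj2 (Away.trans h1 h) h2)

lemma two_other_dirs {b w0 : V} (hb : MT.IsBranchNode b) (hw0 : w0 ∈ MT.branchDirs b) :
    ∃ w1 w2, w1 ∈ MT.branchDirs b ∧ w2 ∈ MT.branchDirs b ∧ w1 ≠ w2 ∧ w1 ≠ w0 ∧ w2 ≠ w0 ∧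
      MT.branchDirs b = {w0, w1, w2} := by
  obtain ⟨x, y, z, hxy, hxz, hyz, hs⟩ := hb.three_dirs
  have hmem : w0 = x ∨ w0 = y ∨ w0 = z := by
    have := hs ▸ hw0; simpa using this
  have hx : x ∈ MT.branchDirs b := by rw [hs]; simp
  have hy : y ∈ MT.branchDirs b := by rw [hs]; simp
  have hz : z ∈ MT.branchDirs b := by rw [hs]; simp
  rcases hmem with rfl | rfl | rfl
  · exact ⟨y, z, hy, hz, hyz, Ne.symm hxy, Ne.symm hxz, hs⟩
  · refine ⟨x, z, hx, hz, hxz, hxy, Ne.symm hyz, ?_⟩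
    rw [hs]; ext u; simp; tauto
  · refine ⟨x, y, hx, hy, hxy, hxz, hyz, ?_⟩
    rw [hs]; ext u; simp; tauto

/-- In a label-free component of `T − v` (for `v` a branch node), there is no branch node. -/
lemma no_branch_in_free {v wside : V} (hv : MT.IsBranchNode v) (hadj : MT.T.Adj v wside)
    (hfree : ∀ z, MT.Away v wside z → ¬ MT.IsLabeled z) :
    ∀ b, MT.Away v wside b → ¬ MT.IsBranchNode b := by
  classical
  by_contra hcon
  push_neg at hcon
  obtain ⟨b0, hb0away, hb0br⟩ := hcon
  set B : Set V := {b | MT.Away v wside b ∧ MT.IsBranchNode b} with hB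
  obtain ⟨b, hbB, hbmax⟩ := Set.exists_max_image B (MT.T.dist v) (Set.toFinite _)
    ⟨b0, hb0away, hb0br⟩
  obtain ⟨hbaway, hbbr⟩ := hbB
  have hbv : b ≠ v := hbaway.ne_right
  obtain ⟨w0, hw0adj, hw0v⟩ := exists_dir (show v ≠ b from Ne.symm hbv)
  obtain ⟨ℓv, hℓv, hℓvb⟩ := hv.marked_beyond hbv
  have hbvℓv : MT.Away b v ℓv := by
    obtain ⟨W, hW⟩ := MT.exists_isPath v ℓv
    refine ⟨W, fun hmem => ?_⟩
    exact hℓvb (Away.symm (away_of_mem_support hW hmem hbv))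
  have hw0mem : w0 ∈ MT.branchDirs b := ⟨hw0adj, ℓv, hℓv, Away.trans hw0v hbvℓv⟩
  obtain ⟨w1, w2, hw1m, hw2m, h12, h10, h20, hdirs⟩ := MT.two_other_dirs hbbr hw0mem
  obtain ⟨hw1adj, ℓ1, hℓ1, hℓ1a⟩ := hw1m
  obtain ⟨hw2adj, ℓ2, hℓ2, hℓ2a⟩ := hw2m
  have hside : ∀ z wi, wi ≠ w0 → MT.T.Adj b wi → MT.Away b wi z → MT.Away v wside z := by
    intro z wi hwi hadji hzi
    refine Away.trans hbaway (away_cons hadji hzi (Ne.symm hbv) ?_)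
    intro hc
    exact hwi (dir_unique hadji hw0adj hc hw0v)
  have hinward : ∀ z wi, wi ≠ w0 → MT.T.Adj b wi → MT.Away b wi z → ¬ MT.IsBranchNode z := by
    intro z wi hwi hadji hzi hzbr
    have hzB : z ∈ B := ⟨hside z wi hwi hadji hzi, hzbr⟩
    have hzb : z ≠ b := hzi.ne_right
    obtain ⟨W, hWlen⟩ := MT.isTree.isConnected.exists_walk_length_eq_dist v z
    have hbW : b ∈ W.support := by
      by_contra hbW
      have hAvz : MT.Away b v z := ⟨W, hbW⟩
      exact hwi (dir_unique hadji hw0adj hzi (Away.trans hw0v hAvz))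
    have h1 : MT.T.dist v b ≤ (W.takeUntil b hbW).length := SimpleGraph.dist_le _
    have h2 : (W.dropUntil b hbW).length ≠ 0 := fun h0 =>
      hzb (SimpleGraph.Walk.eq_of_length_eq_zero h0).symm
    have h3 : (W.takeUntil b hbW).length + (W.dropUntil b hbW).length = W.length := by
      rw [← SimpleGraph.Walk.length_append, SimpleGraph.Walk.take_spec]
    have hlt : MT.T.dist v b < MT.T.dist v z := by rw [← hWlen]; omega
    exact absurd (hbmax z hzB) (not_le.mpr hlt)
  have hne12 : ℓ1 ≠ ℓ2 := by
    rintro rfl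
    exact (away_dir_distinct hw1adj hw2adj hℓ1a hℓ2a h12) (away_refl (Away.ne_right hℓ1a))
  have hatt : ∀ wi ℓi, wi ≠ w0 → MT.T.Adj b wi → MT.IsMarkedLeaf ℓi → MT.Away b wi ℓi →
      ℓi ∈ MT.attached b := by
    intro wi ℓi hwi hadji hml hℓia
    obtain ⟨P, hP⟩ := MT.exists_isPath b ℓi
    refine ⟨hml, P, hP, ?_⟩
    intro zz hzz hzzb hzzℓ
    have hz1 : MT.Away b zz ℓi := away_of_mem_support hP hzz hzzb
    exact hinward zz wi hwi hadji (Away.trans hℓia (Away.symm hz1))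
  have hℓ1att := hatt w1 ℓ1 h10 hw1adj hℓ1 hℓ1a
  have hℓ2att := hatt w2 ℓ2 h20 hw2adj hℓ2 hℓ2a
  have hsub : MT.attached b ⊆ {ℓ1, ℓ2} := by
    rintro ℓ ⟨hml, P, hP, hPint⟩
    have hℓb : ℓ ≠ b := fun hh => hml.not_branch (hh ▸ hbbr)
    obtain ⟨d, hdadj, hdℓ⟩ := exists_dir hℓb
    have hdmem : d ∈ MT.branchDirs b := ⟨hdadj, ℓ, hml, hdℓ⟩
    have hd3 : d = w0 ∨ d = w1 ∨ d = w2 := by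
      have := hdirs ▸ hdmem; simpa using this
    rcases hd3 with h | h | h
    · subst h
      exfalso
      obtain ⟨Pv, hPv⟩ := MT.exists_isPath b v
      have haa' : ℓ ≠ v := fun hh => hml.not_branch (by rw [hh]; exact hv)
      have hcore := core P Pv hP hPv hPint (Ne.symm hℓb) hbv haa' hdadj hdℓ hw0v
        hml not_away_start hℓv hℓvb hℓ1
        (away_dir_distinct hw1adj hdadj hℓ1a hdℓ h10)
      rcases hcore with hmem | hmem
      · exact hml.not_interior hPv hmem hℓb haa'
      · exact (hPint v hmem (Ne.symm hbv) (Ne.symm haa')) hv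
    · subst h
      rcases eq_or_ne ℓ ℓ1 with rfl | hnee
      · simp
      exfalso
      have hbℓ1 : b ≠ ℓ1 := fun hh => hℓ1.not_branch (hh ▸ hbbr)
      obtain ⟨-, P1, hP1, hP1int⟩ := hℓ1att
      have hcore := core P P1 hP hP1 hPint (Ne.symm hℓb) hbℓ1 hnee hdadj hdℓ hℓ1a
        hml not_away_start hℓ1 not_away_start hℓ2
        (away_dir_distinct hw2adj hdadj hℓ2a hdℓ (Ne.symm h12))
      rcases hcore with hmem | hmem
      · exact hml.not_interior hP1 hmem hℓb hnee
      · exact hℓ1.not_interior hP hmem (Ne.symm hbℓ1) (Ne.symm hnee)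
    · subst h
      rcases eq_or_ne ℓ ℓ2 with rfl | hnee
      · simp
      exfalso
      have hbℓ2 : b ≠ ℓ2 := fun hh => hℓ2.not_branch (hh ▸ hbbr)
      obtain ⟨-, P2, hP2, hP2int⟩ := hℓ2att
      have hcore := core P P2 hP hP2 hPint (Ne.symm hℓb) hbℓ2 hnee hdadj hdℓ hℓ2a
        hml not_away_start hℓ2 not_away_start hℓ1
        (away_dir_distinct hw1adj hdadj hℓ1a hdℓ h12)
      rcases hcore with hmem | hmem
      · exact hml.not_interior hP2 hmem hℓb hnee
      · exact hℓ2.not_interior hP hmem (Ne.symm hbℓ2) (Ne.symm hnee)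
  have hss : MT.attached b = {ℓ1, ℓ2} := by
    refine subset_antisymm hsub ?_
    rintro x (rfl | rfl)
    · exact hℓ1att
    · exact hℓ2att
  have hL : MT.IsLNode b := by
    refine ⟨hbbr, ?_⟩
    rw [Nat.card_coe_set_eq, hss, Set.ncard_pair hne12]
  exact hfree b hbaway (Or.inl hL)

lemma IsLabeled.branch {z : V} (h : MT.IsLabeled z) : MT.IsBranchNode z := by
  rcases h with h | h | h <;> exact h.1

lemma mem_hangSet_iff {v u : V} : u ∈ MT.hangSet v ↔
    ∃ w, MT.T.Adj v w ∧ (∀ z, MT.Away v w z → ¬ MT.IsLabeled z) ∧ MT.Away v w u := by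
  unfold hangSet
  simp only [Set.mem_iUnion, Set.mem_setOf_eq]
  constructor
  · rintro ⟨w, ⟨hadj, hfree⟩, hu⟩
    exact ⟨w, hadj, hfree, hu⟩
  · rintro ⟨w, hadj, hfree, hu⟩
    exact ⟨w, ⟨hadj, hfree⟩, hu⟩

/-- A marked leaf in a label-free component of `T - v` is attached to `v`. -/
lemma attached_of_free {v w ℓ : V} (hv : MT.IsBranchNode v) (hadj : MT.T.Adj v w)
    (hfree : ∀ z, MT.Away v w z → ¬ MT.IsLabeled z) (hml : MT.IsMarkedLeaf ℓ)
    (hℓ : MT.Away v w ℓ) : ℓ ∈ MT.attached v := by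
  obtain ⟨P, hP⟩ := MT.exists_isPath v ℓ
  refine ⟨hml, P, hP, ?_⟩
  intro z hz hzv hzℓ hzbr
  have h1 : MT.Away v z ℓ := away_of_mem_support hP hz hzv
  have h2 : MT.Away v w z := Away.trans hℓ (Away.symm h1)
  exact MT.no_branch_in_free hv hadj hfree z h2 hzbr

/-- An attached marked leaf of a branch node lies in its hang-set. -/
lemma attached_mem_hangSet {v ℓ : V} (hv : MT.IsBranchNode v) (hatt : ℓ ∈ MT.attached v) :
    ℓ ∈ MT.hangSet v := by
  obtain ⟨hml, P, hP, hPint⟩ := hatt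
  have hℓv : ℓ ≠ v := fun hh => hml.not_branch (hh ▸ hv)
  obtain ⟨w, hwadj, hwℓ⟩ := exists_dir hℓv
  rw [mem_hangSet_iff]
  refine ⟨w, hwadj, ?_, hwℓ⟩
  intro z hz hzlab
  have hzbr := hzlab.branch
  have hzv : z ≠ v := hz.ne_right
  have hzℓ : ℓ ≠ z := fun hh => hml.not_branch (hh ▸ hzbr)
  by_cases hzP : z ∈ P.support
  · exact (hPint z hzP hzv (Ne.symm hzℓ)) hzbr
  · obtain ⟨Pz, hPz⟩ := MT.exists_isPath v z
    obtain ⟨ℓz, hℓz, hℓz'⟩ := hzbr.marked_beyond (Ne.symm hzv)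
    obtain ⟨ℓ3, hℓ3, hℓ3'⟩ := hv.marked_beyond hℓv
    have hcore := core P Pz hP hPz hPint (Ne.symm hℓv) (Ne.symm hzv) hzℓ hwadj hwℓ hz
      hml not_away_start hℓz hℓz' hℓ3 hℓ3'
    rcases hcore with hmem | hmem
    · exact hml.not_interior hPz hmem hℓv hzℓ
    · exact hzP hmem
  
/-- The marked leaves in `{v} ∪ hangSet v` are exactly the leaves attached to `v`. -/
lemma marked_insert_hangSet {v : V} (hv : MT.IsBranchNode v) :
    {x | MT.IsMarkedLeaf x ∧ x ∈ insert v (MT.hangSet v)} = MT.attached v := by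
  ext x
  constructor
  · rintro ⟨hml, hx⟩
    rcases hx with rfl | hx
    · exact absurd hv hml.not_branch
    · rw [mem_hangSet_iff] at hx
      obtain ⟨w, hadj, hfree, hx⟩ := hx
      exact MT.attached_of_free hv hadj hfree hml hx
  · intro hatt
    exact ⟨hatt.1, Set.mem_insert_of_mem _ (MT.attached_mem_hangSet hv hatt)⟩

/-- Transfer between counting marked indices and counting marked-leaf vertices. -/
lemma card_marked_index (S : Set V) :
    Nat.card {i : Fin MT.n // i ∈ MT.marked ∧ (MT.ord i).1 ∈ S} =
      Set.ncard {x | MT.IsMarkedLeaf x ∧ x ∈ S} := by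
  rw [← Nat.card_coe_set_eq]
  refine Nat.card_eq_of_bijective
    (fun i => ⟨(MT.ord i.1).1, ⟨i.1, i.2.1, rfl⟩, i.2.2⟩) ⟨?_, ?_⟩
  · intro i j hij
    simp only [Subtype.mk.injEq] at hij
    have h1 : ((MT.ord i.1).1 : V) = (MT.ord j.1).1 := hij
    have h2 : MT.ord i.1 = MT.ord j.1 := Subtype.ext h1
    exact Subtype.ext (MT.ord.injective h2)
  · rintro ⟨x, ⟨⟨j, hj, rfl⟩, hxS⟩⟩
    exact ⟨⟨j, hj, hxS⟩, Subtype.ext rfl⟩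

/-- The first branch node along a path towards a branch node. -/
lemma first_branch {x e : V} (P : MT.T.Walk x e) (hP : P.IsPath) (he : MT.IsBranchNode e) :
    ∃ (a : V) (Qa : MT.T.Walk x a), MT.IsBranchNode a ∧ Qa.IsPath ∧
      (∀ z ∈ Qa.support, z ≠ a → ¬ MT.IsBranchNode z) ∧
      (∀ z ∈ Qa.support, z ∈ P.support) := by
  induction P with
  | nil =>
    exact ⟨_, SimpleGraph.Walk.nil, he, by simp,
      fun z hz hza => absurd (by simpa using hz) hza, fun z hz => hz⟩
  | @cons u w e' h p ih =>
    by_cases hbx : MT.IsBranchNode u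
    · exact ⟨u, SimpleGraph.Walk.nil, hbx, by simp,
        fun z hz hza => absurd (by simpa using hz) hza,
        fun z hz => by simp at hz; simp [hz]⟩
    · have hp : p.IsPath := hP.of_cons
      obtain ⟨a, Qa, ha, hQa, hint, hsub⟩ := ih hp he
      have hu : u ∉ Qa.support := fun hu =>
        ((SimpleGraph.Walk.cons_isPath_iff h p).mp hP).2 (hsub u hu)
      refine ⟨a, SimpleGraph.Walk.cons h Qa, ha,
        (SimpleGraph.Walk.cons_isPath_iff h Qa).mpr ⟨hQa, hu⟩, ?_, ?_⟩
      · intro z hz hza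
        rcases List.mem_cons.mp hz with rfl | hz
        · exact hbx
        · exact hint z hz hza
      · intro z hz
        rcases List.mem_cons.mp hz with rfl | hz
        · exact SimpleGraph.Walk.start_mem_support _
        · exact List.mem_cons_of_mem _ (hsub z hz)

lemma append_isPath {u y z : V} {q : MT.T.Walk u y} {s : MT.T.Walk y z}
    (hq : q.IsPath) (hs : s.IsPath)
    (hint : ∀ x ∈ q.support, x ∈ s.support → x = y) : (q.append s).IsPath := by
  rw [SimpleGraph.Walk.isPath_def, SimpleGraph.Walk.support_append, List.nodup_append]
  have hsn := hs.support_nodup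
  rw [SimpleGraph.Walk.support_eq_cons] at hsn
  obtain ⟨hyt, htn⟩ := List.nodup_cons.mp hsn
  refine ⟨hq.support_nodup, htn, ?_⟩
  intro x hxq b hxt hxb
  rw [← hxb] at hxt
  have hx := hint x hxq (List.mem_of_mem_tail hxt)
  exact hyt (hx ▸ hxt)

lemma end_not_mem_takeUntil [DecidableEq V] {u y x : V} {q : MT.T.Walk u y} (hq : q.IsPath)
    (hx : x ∈ q.support) (hxy : x ≠ y) : y ∉ (q.takeUntil x hx).support := by
  intro hyin
  have hnodup : q.support.Nodup := hq.support_nodup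
  rw [← SimpleGraph.Walk.take_spec q hx, SimpleGraph.Walk.support_append,
    List.nodup_append] at hnodup
  have hyd : y ∈ (q.dropUntil x hx).support.tail := by
    have hmem : y ∈ (q.dropUntil x hx).support := SimpleGraph.Walk.end_mem_support _
    rw [SimpleGraph.Walk.support_eq_cons] at hmem
    rcases List.mem_cons.mp hmem with h | h
    · exact absurd h.symm hxy
    · exact h
  exact hnodup.2.2 _ hyin _ hyd rfl

lemma start_not_mem_dropUntil [DecidableEq V] {y z x : V} {py : MT.T.Walk y z} (hpy : py.IsPath)
    (hx : x ∈ py.support) (hxy : x ≠ y) : y ∉ (py.dropUntil x hx).support := by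
  intro hyin
  have hnodup : py.support.Nodup := hpy.support_nodup
  rw [← SimpleGraph.Walk.take_spec py hx, SimpleGraph.Walk.support_append,
    List.nodup_append] at hnodup
  have hyd : y ∈ (py.dropUntil x hx).support.tail := by
    rw [SimpleGraph.Walk.support_eq_cons] at hyin
    rcases List.mem_cons.mp hyin with h | h
    · exact absurd h (Ne.symm hxy)
    · exact h
  exact hnodup.2.2 _ (SimpleGraph.Walk.start_mem_support _) _ hyd rfl

lemma marked_beyond_away {v x : V} (hv : MT.IsBranchNode v) (hvx : v ≠ x) :
    ∃ ℓ, MT.IsMarkedLeaf ℓ ∧ MT.Away x v ℓ ∧ ¬ MT.Away v ℓ x := by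
  obtain ⟨ℓ, hml, hna⟩ := hv.marked_beyond (Ne.symm hvx)
  refine ⟨ℓ, hml, ?_, hna⟩
  obtain ⟨W, hW⟩ := MT.exists_isPath v ℓ
  refine ⟨W, fun hmem => ?_⟩
  exact hna (Away.symm (away_of_mem_support hW hmem (Ne.symm hvx)))

/-- Extending a partial spine path by one spine segment. -/
lemma spine_step {x0 y z : V} {S : Set V}
    (hSbr : ∀ s ∈ S, MT.IsBranchNode s) (hx0S : x0 ∈ S)
    {q : MT.T.Walk x0 y} (hq : q.IsPath)
    (hqbr : ∀ u ∈ q.support, MT.IsBranchNode u → u ∈ S ∨ u = y)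
    (hx0y : x0 ≠ y) (hx0z : x0 ≠ z)
    (hy : MT.IsBranchNode y) (hz : MT.IsBranchNode z)
    (hzS : z ∉ S) (hzy : z ≠ y)
    {py : MT.T.Walk y z} (hpy : py.IsPath)
    (hpyint : ∀ u ∈ py.support, u ≠ y → u ≠ z → ¬ MT.IsBranchNode u) :
    (q.append py).IsPath ∧
      (∀ u ∈ (q.append py).support, MT.IsBranchNode u → (u ∈ S ∨ u = y) ∨ u = z) := by
  classical
  have hdisj : ∀ x ∈ q.support, x ∈ py.support → x = y := by
    intro x hxq hxpy
    by_contra hxy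
    have hx0 : MT.IsBranchNode x0 := hSbr _ hx0S
    by_cases hbx : MT.IsBranchNode x
    · rcases hqbr x hxq hbx with hxS | hxy'
      · rcases eq_or_ne x z with rfl | hxz
        · exact hzS hxS
        · exact (hpyint x hxpy hxy hxz) hbx
      · exact hxy hxy'
    · have hxx0 : x ≠ x0 := fun hh => hbx (hh ▸ hx0)
      have hxz : x ≠ z := fun hh => hbx (hh ▸ hz)
      -- the path from x back to x0 along q
      have hPLp : (q.takeUntil x hxq).reverse.IsPath := (hq.takeUntil hxq).reverse
      have hPLsub : ∀ u ∈ (q.takeUntil x hxq).reverse.support, u ∈ q.support := by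
        intro u hu
        rw [SimpleGraph.Walk.support_reverse, List.mem_reverse] at hu
        exact SimpleGraph.Walk.support_takeUntil_subset _ _ hu
      have hyPL : y ∉ (q.takeUntil x hxq).reverse.support := by
        rw [SimpleGraph.Walk.support_reverse, List.mem_reverse]
        exact end_not_mem_takeUntil hq hxq hxy
      obtain ⟨a, Qa, ha, hQa, hQaint, hQasub⟩ := MT.first_branch _ hPLp hx0
      have hQasubq : ∀ u ∈ Qa.support, u ∈ q.support := fun u hu => hPLsub u (hQasub u hu)
      have hay : a ≠ y := fun hh => hyPL (hh ▸ hQasub a (SimpleGraph.Walk.end_mem_support Qa))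
      have haS : a ∈ S := by
        rcases hqbr a (hQasubq a (SimpleGraph.Walk.end_mem_support Qa)) ha with h | h
        · exact h
        · exact absurd h hay
      have haz : a ≠ z := fun hh => hzS (hh ▸ haS)
      have hax : a ≠ x := fun hh => hbx (hh ▸ ha)
      -- the path from x forward to z along py
      have hPRp : (py.dropUntil x hxpy).IsPath := hpy.dropUntil hxpy
      have hPRsub : ∀ u ∈ (py.dropUntil x hxpy).support, u ∈ py.support :=
        fun u hu => SimpleGraph.Walk.support_dropUntil_subset _ _ hu
      have hyPR : y ∉ (py.dropUntil x hxpy).support := start_not_mem_dropUntil hpy hxpy hxy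
      have hPRint : ∀ u ∈ (py.dropUntil x hxpy).support, u ≠ x → u ≠ z →
          ¬ MT.IsBranchNode u := fun u hu _ huz hb =>
        hpyint u (hPRsub u hu) (fun hh => hyPR (hh ▸ hu)) huz hb
      -- directions from x
      obtain ⟨dy, hdyadj, hdyy⟩ := exists_dir (show y ≠ x from Ne.symm hxy)
      obtain ⟨dz, hdzadj, hdzz⟩ := exists_dir (show z ≠ x from Ne.symm hxz)
      obtain ⟨d0, hd0adj, hd0x0⟩ := exists_dir (show x0 ≠ x from Ne.symm hxx0)
      have hsep_yz : ¬ MT.Away x y z := not_away_of_interior hpy hxpy hxy hxz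
      have hsep_x0y : ¬ MT.Away x x0 y := not_away_of_interior hq hxq hxx0 hxy
      have hdy_dz : dy ≠ dz := fun hh => hsep_yz (Away.trans (Away.symm hdyy) (hh ▸ hdzz))
      have hd0_dy : d0 ≠ dy := fun hh => hsep_x0y (Away.trans (Away.symm hd0x0) (hh ▸ hdyy))
      -- marked leaves beyond y, z, a
      obtain ⟨ℓy, hmly, hℓy, hℓy'⟩ := MT.marked_beyond_away hy (Ne.symm hxy)
      obtain ⟨ℓz, hmlz, hℓz, hℓz'⟩ := MT.marked_beyond_away hz (Ne.symm hxz)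
      obtain ⟨ℓa, hmla, hℓa, hℓa'⟩ := MT.marked_beyond_away ha hax
      have hdymem : dy ∈ MT.branchDirs x := ⟨hdyadj, ℓy, hmly, Away.trans hdyy hℓy⟩
      have hdzmem : dz ∈ MT.branchDirs x := ⟨hdzadj, ℓz, hmlz, Away.trans hdzz hℓz⟩
      have hax0 : MT.Away x a x0 :=
        away_of_mem_support hPLp (hQasub a (SimpleGraph.Walk.end_mem_support Qa)) hax
      have hd0a : MT.Away x d0 a := Away.trans hd0x0 (Away.symm hax0)
      have hd0mem : d0 ∈ MT.branchDirs x := ⟨hd0adj, ℓa, hmla, Away.trans hd0a hℓa⟩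
      have hdz0 : dz = d0 := by
        rcases MT.not_branch_dirs hbx hd0mem hdymem hdzmem hd0_dy with h | h
        · exact h
        · exact absurd h (Ne.symm hdy_dz)
      have hcore := core (py.dropUntil x hxpy) Qa hPRp hQa hPRint hxz (Ne.symm hax)
        (Ne.symm haz) hdzadj (hdz0 ▸ hdzz : MT.Away x dz z).symm.symm
        (hdz0 ▸ hd0a : MT.Away x dz a) hmlz hℓz' hmla hℓa' hmly
        (fun hc => hdy_dz (dir_unique hdyadj hdzadj (Away.trans (Away.trans hdyy hℓy) hc) hdzz))
      rcases hcore with hmem | hmem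
      · rcases hqbr z (hQasubq z hmem) hz with h | h
        · exact hzS h
        · exact hzy h
      · exact (hPRint a hmem hax haz) ha
  refine ⟨append_isPath hq hpy hdisj, ?_⟩
  intro u hu hubr
  rcases (SimpleGraph.Walk.mem_support_append_iff _ _).mp hu with h | h
  · exact Or.inl (hqbr u h hubr)
  · rcases eq_or_ne u y with rfl | huy
    · exact Or.inl (Or.inr rfl)
    · rcases eq_or_ne u z with rfl | huz
      · exact Or.inr rfl
      · exact absurd hubr (hpyint u h huy huz)

lemma five_support {c : Fin 5 → V} (hinj : Function.Injective c)
    (hsp : ∀ i : Fin 4, MT.SpineAdj (c i.castSucc) (c i.succ)) :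
    ∃ q : MT.T.Walk (c 0) (c 4), q.IsPath ∧ (∀ i : Fin 5, c i ∈ q.support) ∧
      (∀ z ∈ q.support, MT.IsBranchNode z → ∃ i : Fin 5, z = c i) := by
  have hne : ∀ i j : Fin 5, i ≠ j → c i ≠ c j := fun i j h hh => h (hinj hh)
  have h01 : MT.SpineAdj (c 0) (c 1) := by
    simpa [show (0 : Fin 4).castSucc = 0 from by decide,
      show (0 : Fin 4).succ = 1 from by decide] using hsp 0
  have h12 : MT.SpineAdj (c 1) (c 2) := by
    simpa [show (1 : Fin 4).castSucc = 1 from by decide,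
      show (1 : Fin 4).succ = 2 from by decide] using hsp 1
  have h23 : MT.SpineAdj (c 2) (c 3) := by
    simpa [show (2 : Fin 4).castSucc = 2 from by decide,
      show (2 : Fin 4).succ = 3 from by decide] using hsp 2
  have h34 : MT.SpineAdj (c 3) (c 4) := by
    simpa [show (3 : Fin 4).castSucc = 3 from by decide,
      show (3 : Fin 4).succ = 4 from by decide] using hsp 3
  obtain ⟨-, hC0, hC1, p0, hp0, hp0int⟩ := h01
  obtain ⟨-, -, hC2, p1, hp1, hp1int⟩ := h12
  obtain ⟨-, -, hC3, p2, hp2, hp2int⟩ := h23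
  obtain ⟨-, -, hC4, p3, hp3, hp3int⟩ := h34
  have hb0 := hC0.1
  have hb1 := hC1.1
  have hb2 := hC2.1
  have hb3 := hC3.1
  have hb4 := hC4.1
  have hq0br : ∀ u ∈ p0.support, MT.IsBranchNode u → u ∈ ({c 0} : Set V) ∨ u = c 1 := by
    intro u hu hubr
    rcases eq_or_ne u (c 0) with rfl | h0
    · exact Or.inl rfl
    · rcases eq_or_ne u (c 1) with rfl | h1
      · exact Or.inr rfl
      · exact absurd hubr (hp0int u hu h0 h1)
  have hstep1 := MT.spine_step (S := {c 0}) (by rintro s rfl; exact hb0) rfl hp0 hq0br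
    (hne 0 1 (by decide)) (hne 0 2 (by decide)) hb1 hb2
    (by simp; exact Ne.symm (hne 0 2 (by decide))) (hne 2 1 (by decide)) hp1 hp1int
  obtain ⟨hq1, hq1br⟩ := hstep1
  have hq1br' : ∀ u ∈ (p0.append p1).support, MT.IsBranchNode u →
      u ∈ ({c 0, c 1} : Set V) ∨ u = c 2 := by
    intro u hu hubr
    rcases hq1br u hu hubr with (h | h) | h
    · exact Or.inl (Or.inl h)
    · exact Or.inl (Or.inr h)
    · exact Or.inr h
  have hstep2 := MT.spine_step (S := {c 0, c 1}) (by rintro s (rfl | rfl); exacts [hb0, hb1])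
    (Or.inl rfl) hq1 hq1br' (hne 0 2 (by decide)) (hne 0 3 (by decide)) hb2 hb3
    (by rintro (h | h); exacts [hne 3 0 (by decide) h, hne 3 1 (by decide) h])
    (hne 3 2 (by decide)) hp2 hp2int
  obtain ⟨hq2, hq2br⟩ := hstep2
  have hq2br' : ∀ u ∈ ((p0.append p1).append p2).support, MT.IsBranchNode u →
      u ∈ ({c 0, c 1, c 2} : Set V) ∨ u = c 3 := by
    intro u hu hubr
    rcases hq2br u hu hubr with (h | h) | h
    · rcases h with h | h
      · exact Or.inl (Or.inl h)
      · exact Or.inl (Or.inr (Or.inl h))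
    · exact Or.inl (Or.inr (Or.inr h))
    · exact Or.inr h
  have hstep3 := MT.spine_step (S := {c 0, c 1, c 2})
    (by rintro s (rfl | rfl | rfl); exacts [hb0, hb1, hb2])
    (Or.inl rfl) hq2 hq2br' (hne 0 3 (by decide)) (hne 0 4 (by decide)) hb3 hb4
    (by rintro (h | h | h);
        exacts [hne 4 0 (by decide) h, hne 4 1 (by decide) h, hne 4 2 (by decide) h])
    (hne 4 3 (by decide)) hp3 hp3int
  obtain ⟨hq3, hq3br⟩ := hstep3
  refine ⟨_, hq3, ?_, ?_⟩
  · intro i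
    have hm0 : c 0 ∈ (((p0.append p1).append p2).append p3).support :=
      SimpleGraph.Walk.start_mem_support _
    have hm4 : c 4 ∈ (((p0.append p1).append p2).append p3).support :=
      SimpleGraph.Walk.end_mem_support _
    have hsub3 : ∀ u ∈ ((p0.append p1).append p2).support,
        u ∈ (((p0.append p1).append p2).append p3).support :=
      fun u hu => SimpleGraph.Walk.subset_support_append_left _ _ hu
    have hsub2 : ∀ u ∈ (p0.append p1).support, u ∈ ((p0.append p1).append p2).support :=
      fun u hu => SimpleGraph.Walk.subset_support_append_left _ _ hu
    have hm1 : c 1 ∈ (p0.append p1).support := by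
      rw [SimpleGraph.Walk.mem_support_append_iff]
      exact Or.inl (SimpleGraph.Walk.end_mem_support _)
    have hm2 : c 2 ∈ ((p0.append p1).append p2).support := by
      rw [SimpleGraph.Walk.mem_support_append_iff]
      exact Or.inl (SimpleGraph.Walk.end_mem_support _)
    have hm3 : c 3 ∈ (((p0.append p1).append p2).append p3).support := by
      rw [SimpleGraph.Walk.mem_support_append_iff]
      exact Or.inl (SimpleGraph.Walk.end_mem_support _)
    fin_cases i
    · exact hm0
    · exact hsub3 _ (hsub2 _ hm1)
    · exact hsub3 _ hm2
    · exact hm3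
    · exact hm4
  · intro z hz hzbr
    rcases hq3br z hz hzbr with (h | h) | h
    · rcases h with h | h | h
      · exact ⟨0, h⟩
      · exact ⟨1, h⟩
      · exact ⟨2, h⟩
    · exact ⟨3, h⟩
    · exact ⟨4, h⟩

/-- Structure of a 5-component: facts about its defining path. -/
lemma five_facts {c : Fin 5 → V} {K : Set V} (h : MT.IsFiveComponentOn c K) :
    ∃ p : MT.T.Walk (c 0) (c 4), p.IsPath ∧
      K = {u | u ∈ p.support} ∪ ⋃ v ∈ {u | u ∈ p.support}, MT.hangSet v ∧
      (∀ i : Fin 5, c i ∈ p.support) ∧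
      (∀ z ∈ p.support, MT.IsBranchNode z → ∃ i : Fin 5, z = c i) := by
  obtain ⟨hinj, hsp, p, hp, hK⟩ := h
  obtain ⟨q, hq, hqsup, hqbr⟩ := MT.five_support hinj hsp
  obtain ⟨P, -, hP⟩ := MT.isTree.existsUnique_path (c 0) (c 4)
  have hqp : q = p := by rw [hP _ hq, hP _ hp]
  rw [hqp] at hq hqsup hqbr
  exact ⟨p, hp, hK, hqsup, hqbr⟩

lemma count_L {lam : V} (h : MT.IsLNode lam) :
    Nat.card {i : Fin MT.n // i ∈ MT.marked ∧ (MT.ord i).1 ∈ MT.LComponent lam} = 2 := by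
  rw [MT.card_marked_index]
  have he : {x | MT.IsMarkedLeaf x ∧ x ∈ MT.LComponent lam} = MT.attached lam :=
    MT.marked_insert_hangSet h.1
  rw [he, ← Nat.card_coe_set_eq]
  exact h.2

lemma attached_disjoint {v v' ℓ : V} (hv : MT.IsBranchNode v) (hv'lab : MT.IsLabeled v')
    (hne : v ≠ v') (h1 : ℓ ∈ MT.attached v) (h2 : ℓ ∈ MT.attached v') : False := by
  have h1h := MT.attached_mem_hangSet hv h1
  rw [mem_hangSet_iff] at h1h
  obtain ⟨w, hadj, hfree, haway⟩ := h1h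
  have hv's : ¬ MT.Away v w v' := fun hc => hfree v' hc hv'lab
  obtain ⟨hml, P', hP', hint'⟩ := h2
  have hvP' : v ∈ P'.support := by
    by_contra hnot
    exact hv's (Away.trans haway (Away.symm (⟨P', hnot⟩ : MT.Away v v' ℓ)))
  have hvℓ : v ≠ ℓ := fun hh => hml.not_branch (hh ▸ hv)
  exact (hint' v hvP' hne hvℓ) hv

lemma five_cnode {c : Fin 5 → V} {K : Set V} (h : MT.IsFiveComponentOn c K) :
    ∀ i : Fin 5, MT.IsCNode (c i) := by
  have hsp := h.2.1
  intro i
  fin_cases i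
  · have := (hsp 0).2.1
    simpa [show (0 : Fin 4).castSucc = 0 from by decide] using this
  · have := (hsp 0).2.2.1
    simpa [show (0 : Fin 4).succ = 1 from by decide] using this
  · have := (hsp 1).2.2.1
    simpa [show (1 : Fin 4).succ = 2 from by decide] using this
  · have := (hsp 2).2.2.1
    simpa [show (2 : Fin 4).succ = 3 from by decide] using this
  · have := (hsp 3).2.2.1
    simpa [show (3 : Fin 4).succ = 4 from by decide] using this

lemma count_five {c : Fin 5 → V} {K : Set V} (h : MT.IsFiveComponentOn c K) :
    Nat.card {i : Fin MT.n // i ∈ MT.marked ∧ (MT.ord i).1 ∈ K} = 5 := by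
  classical
  have hcn := MT.five_cnode h
  have hb : ∀ i : Fin 5, MT.IsBranchNode (c i) := fun i => (hcn i).1
  have hinj := h.1
  obtain ⟨p, hp, hK, hsup, hbr⟩ := MT.five_facts h
  have hml_eq : {x | MT.IsMarkedLeaf x ∧ x ∈ K} =
      {x | ∃ i : Fin 5, x ∈ MT.attached (c i)} := by
    ext x
    constructor
    · rintro ⟨hml, hxK⟩
      rw [hK] at hxK
      rcases hxK with hxp | hxh
      · exfalso
        rcases eq_or_ne x (c 0) with rfl | h0
        · exact hml.not_branch (hb 0)
        rcases eq_or_ne x (c 4) with rfl | h4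
        · exact hml.not_branch (hb 4)
        exact hml.not_interior hp hxp h0 h4
      · simp only [Set.mem_iUnion, Set.mem_setOf_eq] at hxh
        obtain ⟨v, hvp, hxhang⟩ := hxh
        rw [mem_hangSet_iff] at hxhang
        obtain ⟨w, hadj, hfree, haway⟩ := hxhang
        by_cases hbv : MT.IsBranchNode v
        · obtain ⟨i, rfl⟩ := hbr v hvp hbv
          exact ⟨i, MT.attached_of_free (hb i) hadj hfree hml haway⟩
        · exfalso
          have hv0 : v ≠ c 0 := fun hh => hbv (hh ▸ hb 0)
          have hv4 : v ≠ c 4 := fun hh => hbv (hh ▸ hb 4)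
          obtain ⟨d0, hd0adj, hd0⟩ := exists_dir (show c 0 ≠ v from Ne.symm hv0)
          obtain ⟨d4, hd4adj, hd4⟩ := exists_dir (show c 4 ≠ v from Ne.symm hv4)
          obtain ⟨ℓ0, hml0, hℓ0, -⟩ := MT.marked_beyond_away (hb 0) (Ne.symm hv0)
          obtain ⟨ℓ4, hml4, hℓ4, -⟩ := MT.marked_beyond_away (hb 4) (Ne.symm hv4)
          have hd0mem : d0 ∈ MT.branchDirs v := ⟨hd0adj, ℓ0, hml0, Away.trans hd0 hℓ0⟩
          have hd4mem : d4 ∈ MT.branchDirs v := ⟨hd4adj, ℓ4, hml4, Away.trans hd4 hℓ4⟩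
          have hwmem : w ∈ MT.branchDirs v := ⟨hadj, x, hml, haway⟩
          have hsep : ¬ MT.Away v (c 0) (c 4) := not_away_of_interior hp hvp hv0 hv4
          have hd04 : d0 ≠ d4 := fun hh => hsep (Away.trans (Away.symm hd0) (hh ▸ hd4))
          rcases MT.not_branch_dirs hbv hd0mem hd4mem hwmem hd04 with rfl | rfl
          · exact hfree (c 0) hd0 (Or.inr (Or.inl (hcn 0)))
          · exact hfree (c 4) hd4 (Or.inr (Or.inl (hcn 4)))
    · rintro ⟨i, hx⟩
      refine ⟨hx.1, ?_⟩
      rw [hK]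
      refine Or.inr ?_
      simp only [Set.mem_iUnion, Set.mem_setOf_eq]
      exact ⟨c i, hsup i, MT.attached_mem_hangSet (hb i) hx⟩
  have hsingle : ∀ i : Fin 5, ∃ ℓ, MT.attached (c i) = {ℓ} := by
    intro i
    have := (hcn i).2
    rw [Nat.card_coe_set_eq] at this
    exact Set.ncard_eq_one.mp this
  choose ℓf hℓf using hsingle
  have hinjℓ : Function.Injective ℓf := by
    intro i j hij
    by_contra hne
    have hcij : c i ≠ c j := fun hh => hne (hinj hh)
    have h1 : ℓf i ∈ MT.attached (c i) := by rw [hℓf i]; rfl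
    have h2 : ℓf i ∈ MT.attached (c j) := by rw [hℓf j, hij]; rfl
    exact MT.attached_disjoint (hb i) (Or.inr (Or.inl (hcn j))) hcij h1 h2
  have hrange : {x | ∃ i : Fin 5, x ∈ MT.attached (c i)} = Set.range ℓf := by
    ext x
    simp only [Set.mem_setOf_eq, Set.mem_range]
    constructor
    · rintro ⟨i, hx⟩
      rw [hℓf i] at hx
      exact ⟨i, hx.symm⟩
    · rintro ⟨i, rfl⟩
      exact ⟨i, by rw [hℓf i]; rfl⟩
  rw [MT.card_marked_index, hml_eq, hrange, ← Set.image_univ,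
    Set.ncard_image_of_injective _ hinjℓ, Set.ncard_univ, Nat.card_eq_fintype_card,
    Fintype.card_fin]

lemma side_exit {v w x t : V} (hx : MT.Away v w x) (ht : ¬ MT.Away v w t)
    (q : MT.T.Walk x t) : v ∈ q.support := by
  by_contra h
  exact ht (Away.trans hx ⟨q, h⟩)

lemma labeled_not_mem_hangSet {z v : V} (hz : MT.IsLabeled z) : z ∉ MT.hangSet v := by
  rw [mem_hangSet_iff]
  rintro ⟨w, hadj, hfree, hz'⟩
  exact hfree z hz' hz

lemma hang_hang_labeled {x v v' : V} (hvlab : MT.IsLabeled v) (hv'lab : MT.IsLabeled v')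
    (hne : v ≠ v') (hx : x ∈ MT.hangSet v) (hx' : x ∈ MT.hangSet v') : False := by
  rw [mem_hangSet_iff] at hx hx'
  obtain ⟨w, hadj, hfree, hx⟩ := hx
  obtain ⟨w', hadj', hfree', hx'⟩ := hx'
  have hnv' : ¬ MT.Away v w v' := fun hc => hfree v' hc hv'lab
  obtain ⟨P, hP⟩ := MT.exists_isPath x v
  by_cases hvP : v' ∈ P.support
  · have h1 : MT.Away v v' x := by
      refine away_of_mem_support hP.reverse ?_ (Ne.symm hne)
      rw [SimpleGraph.Walk.support_reverse, List.mem_reverse]; exact hvP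
    exact hnv' (Away.trans hx (Away.symm h1))
  · have h2 : MT.Away v' x v := ⟨P, hvP⟩
    exact hfree' v (Away.trans hx' h2) hvlab

/-- Two vertex-disjoint 5-component spines have no common path vertex. -/
lemma shared_path_vertex {c c' : Fin 5 → V} (hdisj : Disjoint (Set.range c) (Set.range c'))
    {p : MT.T.Walk (c 0) (c 4)} (hp : p.IsPath)
    (hbr : ∀ z ∈ p.support, MT.IsBranchNode z → ∃ i, z = c i)
    (hb : ∀ i, MT.IsBranchNode (c i))
    {p' : MT.T.Walk (c' 0) (c' 4)} (hp' : p'.IsPath)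
    (hbr' : ∀ z ∈ p'.support, MT.IsBranchNode z → ∃ i, z = c' i)
    (hb' : ∀ i, MT.IsBranchNode (c' i))
    {x : V} (hx : x ∈ p.support) (hx' : x ∈ p'.support) : False := by
  classical
  have hnotboth : ∀ z, z ∈ Set.range c → z ∈ Set.range c' → False := by
    intro z h1 h2
    exact Set.disjoint_left.mp hdisj h1 h2
  by_cases hbx : MT.IsBranchNode x
  · obtain ⟨i, rfl⟩ := hbr x hx hbx
    obtain ⟨j, hj⟩ := hbr' _ hx' hbx
    exact hnotboth _ ⟨i, rfl⟩ ⟨j, hj.symm⟩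
  have hx0 : x ≠ c 0 := fun hh => hbx (hh ▸ hb 0)
  have hx4 : x ≠ c 4 := fun hh => hbx (hh ▸ hb 4)
  have hx0' : x ≠ c' 0 := fun hh => hbx (hh ▸ hb' 0)
  -- left piece of p, right piece of p, left piece of p'
  have hPLp : (p.takeUntil x hx).reverse.IsPath := (hp.takeUntil hx).reverse
  have hPLsub : ∀ u ∈ (p.takeUntil x hx).reverse.support, u ∈ p.support := by
    intro u hu
    rw [SimpleGraph.Walk.support_reverse, List.mem_reverse] at hu
    exact SimpleGraph.Walk.support_takeUntil_subset _ _ hu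
  have hPRp : (p.dropUntil x hx).IsPath := hp.dropUntil hx
  have hPRsub : ∀ u ∈ (p.dropUntil x hx).support, u ∈ p.support :=
    fun u hu => SimpleGraph.Walk.support_dropUntil_subset _ _ hu
  have hPLp' : (p'.takeUntil x hx').reverse.IsPath := (hp'.takeUntil hx').reverse
  have hPLsub' : ∀ u ∈ (p'.takeUntil x hx').reverse.support, u ∈ p'.support := by
    intro u hu
    rw [SimpleGraph.Walk.support_reverse, List.mem_reverse] at hu
    exact SimpleGraph.Walk.support_takeUntil_subset _ _ hu
  obtain ⟨aL, QL, haL, hQL, hQLint, hQLsub⟩ := MT.first_branch _ hPLp (hb 0)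
  obtain ⟨aR, QR, haR, hQR, hQRint, hQRsub⟩ := MT.first_branch _ hPRp (hb 4)
  obtain ⟨a', Q', ha', hQ', hQ'int, hQ'sub⟩ := MT.first_branch _ hPLp' (hb' 0)
  have haLp : aL ∈ p.support := hPLsub _ (hQLsub _ (SimpleGraph.Walk.end_mem_support QL))
  have haRp : aR ∈ p.support := hPRsub _ (hQRsub _ (SimpleGraph.Walk.end_mem_support QR))
  have ha'p' : a' ∈ p'.support := hPLsub' _ (hQ'sub _ (SimpleGraph.Walk.end_mem_support Q'))
  have haLx : aL ≠ x := fun hh => hbx (hh ▸ haL)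
  have haRx : aR ≠ x := fun hh => hbx (hh ▸ haR)
  have ha'x : a' ≠ x := fun hh => hbx (hh ▸ ha')
  obtain ⟨dL, hdLadj, hdL⟩ := exists_dir haLx
  obtain ⟨dR, hdRadj, hdR⟩ := exists_dir haRx
  obtain ⟨d', hd'adj, hd'⟩ := exists_dir ha'x
  have haLc0 : MT.Away x aL (c 0) :=
    away_of_mem_support hPLp (hQLsub _ (SimpleGraph.Walk.end_mem_support QL)) haLx
  have haRc4 : MT.Away x aR (c 4) :=
    away_of_mem_support hPRp (hQRsub _ (SimpleGraph.Walk.end_mem_support QR)) haRx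
  have hsep : ¬ MT.Away x (c 0) (c 4) := not_away_of_interior hp hx hx0 hx4
  have hdLR : dL ≠ dR := fun hh => hsep
    (Away.trans (Away.symm (Away.trans hdL haLc0)) (hh ▸ (Away.trans hdR haRc4)))
  obtain ⟨ℓL, hmlL, hℓL, hnaL⟩ := MT.marked_beyond_away haL haLx
  obtain ⟨ℓR, hmlR, hℓR, hnaR⟩ := MT.marked_beyond_away haR haRx
  obtain ⟨ℓ', hml', hℓ', hna'⟩ := MT.marked_beyond_away ha' ha'x
  have hdLmem : dL ∈ MT.branchDirs x := ⟨hdLadj, ℓL, hmlL, Away.trans hdL hℓL⟩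
  have hdRmem : dR ∈ MT.branchDirs x := ⟨hdRadj, ℓR, hmlR, Away.trans hdR hℓR⟩
  have hd'mem : d' ∈ MT.branchDirs x := ⟨hd'adj, ℓ', hml', Away.trans hd' hℓ'⟩
  have ha'rc' : a' ∈ Set.range c' := by
    obtain ⟨j, hj⟩ := hbr' a' ha'p' ha'
    exact ⟨j, hj.symm⟩
  have hQ'int' : ∀ z ∈ Q'.support, z ≠ x → z ≠ a' → ¬ MT.IsBranchNode z :=
    fun z hz _ hza => hQ'int z hz hza
  have haLrc : aL ∈ Set.range c := by
    obtain ⟨i, hi⟩ := hbr aL haLp haL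
    exact ⟨i, hi.symm⟩
  have haRrc : aR ∈ Set.range c := by
    obtain ⟨i, hi⟩ := hbr aR haRp haR
    exact ⟨i, hi.symm⟩
  rcases MT.not_branch_dirs hbx hdLmem hdRmem hd'mem hdLR with hcase | hcase
  · -- d' = dL
    have haa' : a' ≠ aL := fun hh => hnotboth aL haLrc (hh ▸ ha'rc')
    have h3' : ¬ MT.Away x ℓR a' := by
      intro hc
      have h1 : MT.Away x dR a' := Away.trans (Away.trans hdR hℓR) hc
      have h2 : dR = d' := dir_unique hdRadj hd'adj h1 hd'
      exact hdLR (hcase ▸ h2.symm)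
    have hcore := core Q' QL hQ' hQL hQ'int' (Ne.symm ha'x) (Ne.symm haLx) haa'
      hd'adj hd' (hcase ▸ hdL : MT.Away x d' aL) hml' hna' hmlL hnaL hmlR h3'
    rcases hcore with hmem | hmem
    · obtain ⟨i, hi⟩ := hbr a' (hPLsub _ (hQLsub _ hmem)) ha'
      exact hnotboth a' ⟨i, hi.symm⟩ ha'rc'
    · obtain ⟨j, hj⟩ := hbr' aL (hPLsub' _ (hQ'sub _ hmem)) haL
      exact hnotboth aL haLrc ⟨j, hj.symm⟩
  · -- d' = dR
    have haa' : a' ≠ aR := fun hh => hnotboth aR haRrc (hh ▸ ha'rc')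
    have h3' : ¬ MT.Away x ℓL a' := by
      intro hc
      have h1 : MT.Away x dL a' := Away.trans (Away.trans hdL hℓL) hc
      have h2 : dL = d' := dir_unique hdLadj hd'adj h1 hd'
      exact hdLR (hcase ▸ h2)
    have hcore := core Q' QR hQ' hQR hQ'int' (Ne.symm ha'x) (Ne.symm haRx) haa'
      hd'adj hd' (hcase ▸ hdR : MT.Away x d' aR) hml' hna' hmlR hnaR hmlL h3'
    rcases hcore with hmem | hmem
    · obtain ⟨i, hi⟩ := hbr a' (hPRsub _ (hQRsub _ hmem)) ha'
      exact hnotboth a' ⟨i, hi.symm⟩ ha'rc'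
    · obtain ⟨j, hj⟩ := hbr' aR (hPLsub' _ (hQ'sub _ hmem)) haR
      exact hnotboth aR haRrc ⟨j, hj.symm⟩

lemma not_L_and_C {v : V} (h : MT.IsLNode v) (h' : MT.IsCNode v) : False := by
  have h1 := h.2
  have h2 := h'.2
  omega

lemma disj_LL {lam lam' : V} (h : MT.IsLNode lam) (h' : MT.IsLNode lam')
    (hne : lam ≠ lam') : Disjoint (MT.LComponent lam) (MT.LComponent lam') := by
  rw [Set.disjoint_left]
  intro x hx hx'
  rcases Set.mem_insert_iff.mp hx with rfl | hx
  · rcases Set.mem_insert_iff.mp hx' with h1 | h1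
    · exact hne h1
    · exact MT.labeled_not_mem_hangSet (Or.inl h) h1
  · rcases Set.mem_insert_iff.mp hx' with rfl | h1
    · exact MT.labeled_not_mem_hangSet (Or.inl h') hx
    · exact MT.hang_hang_labeled (Or.inl h) (Or.inl h') hne hx h1

lemma disj_L5 {lam : V} {c : Fin 5 → V} {K : Set V} (h : MT.IsLNode lam)
    (h5 : MT.IsFiveComponentOn c K) : Disjoint (MT.LComponent lam) K := by
  classical
  have hcn := MT.five_cnode h5
  obtain ⟨p, hp, hK, hsup, hbr⟩ := MT.five_facts h5
  have hlamlab : MT.IsLabeled lam := Or.inl h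
  have hlamp : lam ∉ p.support := by
    intro hmem
    obtain ⟨i, hi⟩ := hbr lam hmem h.1
    exact MT.not_L_and_C h (hi ▸ hcn i)
  rw [Set.disjoint_left]
  intro x hx hxK
  rw [hK] at hxK
  rcases Set.mem_insert_iff.mp hx with rfl | hxh
  · rcases hxK with hxp | hxh'
    · exact hlamp hxp
    · simp only [Set.mem_iUnion, Set.mem_setOf_eq] at hxh'
      obtain ⟨v, -, hxhang⟩ := hxh'
      exact MT.labeled_not_mem_hangSet hlamlab hxhang
  · rw [mem_hangSet_iff] at hxh
    obtain ⟨w, hadj, hfree, haway⟩ := hxh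
    have hnc0 : ¬ MT.Away lam w (c 0) := fun hc => hfree _ hc (Or.inr (Or.inl (hcn 0)))
    rcases hxK with hxp | hxh'
    · have hlam : lam ∈ ((p.takeUntil x hxp).reverse).support :=
        side_exit haway hnc0 _
      apply hlamp
      rw [SimpleGraph.Walk.support_reverse, List.mem_reverse] at hlam
      exact SimpleGraph.Walk.support_takeUntil_subset _ _ hlam
    · simp only [Set.mem_iUnion, Set.mem_setOf_eq] at hxh'
      obtain ⟨u, hup, hxhang'⟩ := hxh'
      rw [mem_hangSet_iff] at hxhang'
      obtain ⟨w', hadj', hfree', haway'⟩ := hxhang'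
      rcases eq_or_ne u lam with rfl | hulam
      · exact hlamp hup
      by_cases hAw : MT.Away lam w u
      · have hlam : lam ∈ ((p.takeUntil u hup).reverse).support :=
          side_exit hAw hnc0 _
        apply hlamp
        rw [SimpleGraph.Walk.support_reverse, List.mem_reverse] at hlam
        exact SimpleGraph.Walk.support_takeUntil_subset _ _ hlam
      · obtain ⟨P, hP⟩ := MT.exists_isPath x u
        have hlamP : lam ∈ P.support := side_exit haway hAw P
        have h1 : MT.Away u lam x := by
          refine away_of_mem_support hP.reverse ?_ (Ne.symm hulam)
          rw [SimpleGraph.Walk.support_reverse, List.mem_reverse]; exact hlamP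
        exact hfree' lam (Away.trans haway' (Away.symm h1)) hlamlab

lemma disj_55 {c c' : Fin 5 → V} {K K' : Set V} (h : MT.IsFiveComponentOn c K)
    (h' : MT.IsFiveComponentOn c' K') (hd : Disjoint (Set.range c) (Set.range c')) :
    Disjoint K K' := by
  classical
  have hcn := MT.five_cnode h
  have hcn' := MT.five_cnode h'
  have hb : ∀ i, MT.IsBranchNode (c i) := fun i => (hcn i).1
  have hb' : ∀ i, MT.IsBranchNode (c' i) := fun i => (hcn' i).1
  obtain ⟨p, hp, hK, hsup, hbr⟩ := MT.five_facts h
  obtain ⟨p', hp', hK', hsup', hbr'⟩ := MT.five_facts h'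
  have shared : ∀ x, x ∈ p.support → x ∈ p'.support → False :=
    fun x hx hx' => MT.shared_path_vertex hd hp hbr hb hp' hbr' hb' hx hx'
  rw [Set.disjoint_left]
  intro x hxK hxK'
  rw [hK] at hxK
  rw [hK'] at hxK'
  rcases hxK with hxp | hxh
  · rcases hxK' with hxp' | hxh'
    · exact shared x hxp hxp'
    · -- x on p, x in a hang of p'
      simp only [Set.mem_iUnion, Set.mem_setOf_eq] at hxh'
      obtain ⟨v', hv'p', hxhang'⟩ := hxh'
      rw [mem_hangSet_iff] at hxhang'
      obtain ⟨w', hadj', hfree', haway'⟩ := hxhang'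
      have hnc0 : ¬ MT.Away v' w' (c 0) := fun hc => hfree' _ hc (Or.inr (Or.inl (hcn 0)))
      have hv'mem : v' ∈ ((p.takeUntil x hxp).reverse).support :=
        side_exit haway' hnc0 _
      rw [SimpleGraph.Walk.support_reverse, List.mem_reverse] at hv'mem
      exact shared v' (SimpleGraph.Walk.support_takeUntil_subset _ _ hv'mem) hv'p'
  · rcases hxK' with hxp' | hxh'
    · -- x in a hang of p, x on p'
      simp only [Set.mem_iUnion, Set.mem_setOf_eq] at hxh
      obtain ⟨v, hvp, hxhang⟩ := hxh
      rw [mem_hangSet_iff] at hxhang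
      obtain ⟨w, hadj, hfree, haway⟩ := hxhang
      have hnc0 : ¬ MT.Away v w (c' 0) := fun hc => hfree _ hc (Or.inr (Or.inl (hcn' 0)))
      have hvmem : v ∈ ((p'.takeUntil x hxp').reverse).support :=
        side_exit haway hnc0 _
      rw [SimpleGraph.Walk.support_reverse, List.mem_reverse] at hvmem
      exact shared v hvp (SimpleGraph.Walk.support_takeUntil_subset _ _ hvmem)
    · -- x in hangs of both
      simp only [Set.mem_iUnion, Set.mem_setOf_eq] at hxh hxh'
      obtain ⟨v, hvp, hxhang⟩ := hxh
      obtain ⟨v', hv'p', hxhang'⟩ := hxh'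
      rw [mem_hangSet_iff] at hxhang hxhang'
      obtain ⟨w, hadj, hfree, haway⟩ := hxhang
      obtain ⟨w', hadj', hfree', haway'⟩ := hxhang'
      rcases eq_or_ne v v' with rfl | hne
      · exact shared v hvp hv'p'
      by_cases hAw : MT.Away v w v'
      · have hnc'0 : ¬ MT.Away v w (c' 0) := fun hc => hfree _ hc (Or.inr (Or.inl (hcn' 0)))
        have hvmem : v ∈ ((p'.takeUntil v' hv'p').reverse).support :=
          side_exit hAw hnc'0 _
        rw [SimpleGraph.Walk.support_reverse, List.mem_reverse] at hvmem
        exact shared v hvp (SimpleGraph.Walk.support_takeUntil_subset _ _ hvmem)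
      · obtain ⟨P, hP⟩ := MT.exists_isPath x v'
        have hvP : v ∈ P.support := side_exit haway hAw P
        have h1 : MT.Away v' v x := by
          refine away_of_mem_support hP.reverse ?_ hne
          rw [SimpleGraph.Walk.support_reverse, List.mem_reverse]; exact hvP
        have hAv' : MT.Away v' w' v := Away.trans haway' (Away.symm h1)
        have hnc0 : ¬ MT.Away v' w' (c 0) := fun hc => hfree' _ hc (Or.inr (Or.inl (hcn 0)))
        have hv'mem : v' ∈ ((p.takeUntil v hvp).reverse).support :=
          side_exit hAv' hnc0 _
        rw [SimpleGraph.Walk.support_reverse, List.mem_reverse] at hv'mem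
        exact shared v' (SimpleGraph.Walk.support_takeUntil_subset _ _ hv'mem) hv'p'
end MarkedTree

/-- Let `T` be a marked tree.  The components of `T` are pairwise
vertex-disjoint (distinct L-components are disjoint, an L-component is disjoint from any
5-component, and 5-components defined by disjoint quintuples of C-nodes — as in the partition
of each spine into groups of five — are disjoint); moreover every L-component contains exactly
two marked leaves and every 5-component contains exactly five marked leaves. -/
theorem components_disjoint_and_counts
    {V : Type*} [Fintype V] (MT : MarkedTree V) :
    (∀ lam lam' : V, MT.IsLNode lam → MT.IsLNode lam' → lam ≠ lam' →
      Disjoint (MT.LComponent lam) (MT.LComponent lam')) ∧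
    (∀ (lam : V) (c : Fin 5 → V) (K : Set V), MT.IsLNode lam →
      MT.IsFiveComponentOn c K → Disjoint (MT.LComponent lam) K) ∧
    (∀ (c c' : Fin 5 → V) (K K' : Set V), MT.IsFiveComponentOn c K →
      MT.IsFiveComponentOn c' K' → Disjoint (Set.range c) (Set.range c') →
      Disjoint K K') ∧
    (∀ lam : V, MT.IsLNode lam →
      Nat.card {i : Fin MT.n // i ∈ MT.marked ∧ (MT.ord i).1 ∈ MT.LComponent lam} = 2) ∧
    (∀ (c : Fin 5 → V) (K : Set V), MT.IsFiveComponentOn c K →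
      Nat.card {i : Fin MT.n // i ∈ MT.marked ∧ (MT.ord i).1 ∈ K} = 5) := by
  refine ⟨?_, ?_, ?_, ?_, ?_⟩
  · exact fun lam lam' h h' hne => MT.disj_LL h h' hne
  · exact fun lam c K h h5 => MT.disj_L5 h h5
  · exact fun c c' K K' h h' hd => MT.disj_55 h h' hd
  · exact fun lam h => MT.count_L h
  · exact fun c K h => MT.count_five h
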